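/- Let U ⊂ ℝ^N be a Lebesgue-measurable set of finite measure |U|, let σ > 0, and let u, v : U → ℝ be measurable functions such that |u·v|^{σ+1} is integrable on U. Then ∫_U |u(x)|^σ · |v(x)|^σ · |log|u(x)·v(x)|| dx ≤ |U|/(σ·e) + (1/e)·∫_U |u(x)·v(x)|^{σ+1} dx, where the integrand on the left is interpreted as 0 at points where u(x)·v(x) = 0 and e = exp(1). -/

import Mathlib

open MeasureTheory

lemma log_le_div_exp_one {x : ℝ} (hx : 0 < x) : Real.log x ≤ x / Real.exp 1 := by
  have he : (0:ℝ) < Real.exp 1 := Real.exp_pos 1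
  have h : Real.log (x / Real.exp 1) ≤ x / Real.exp 1 - 1 :=
    Real.log_le_sub_one_of_pos (by positivity)
  rw [Real.log_div (ne_of_gt hx) (ne_of_gt he), Real.log_exp] at h
  linarith

lemma pointwise_log_bound {σ : ℝ} (hσ : 0 < σ) {t : ℝ} (ht : 0 ≤ t) :
    t ^ σ * |Real.log t| ≤ 1 / (σ * Real.exp 1) + t ^ (σ + 1) / Real.exp 1 := by
  have he : (0:ℝ) < Real.exp 1 := Real.exp_pos 1
  rcases eq_or_lt_of_le ht with h0 | h0
  · rw [← h0, Real.zero_rpow (ne_of_gt hσ)]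
    simp only [zero_mul]
    positivity
  rcases le_or_gt t 1 with h1 | h1
  · -- |log t| = -log t; σ * (-log t) = log (t ^ (-σ)) ≤ t^(-σ)/e
    have hlog : Real.log t ≤ 0 := Real.log_nonpos ht h1
    rw [abs_of_nonpos hlog]
    have key : Real.log (t ^ (-σ)) ≤ t ^ (-σ) / Real.exp 1 :=
      log_le_div_exp_one (Real.rpow_pos_of_pos h0 _)
    rw [Real.log_rpow h0] at key
    have hmul : t ^ σ * (-σ * Real.log t) ≤ t ^ σ * (t ^ (-σ) / Real.exp 1) := by
      apply mul_le_mul_of_nonneg_left key (Real.rpow_nonneg ht σ)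
    have hts : t ^ σ * t ^ (-σ) = 1 := by
      rw [← Real.rpow_add h0]; simp
    have h2 : t ^ σ * (t ^ (-σ) / Real.exp 1) = 1 / Real.exp 1 := by
      rw [mul_div_assoc', hts]
    have h3 : t ^ σ * -Real.log t ≤ 1 / (σ * Real.exp 1) := by
      have : σ * (t ^ σ * -Real.log t) ≤ 1 / Real.exp 1 := by
        calc σ * (t ^ σ * -Real.log t) = t ^ σ * (-σ * Real.log t) := by ring
        _ ≤ t ^ σ * (t ^ (-σ) / Real.exp 1) := hmul
        _ = 1 / Real.exp 1 := h2
      rw [div_mul_eq_div_div, div_div, le_div_iff₀ (by positivity)]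
      have h5 : (1 / Real.exp 1) * Real.exp 1 = 1 := by field_simp
      nlinarith [mul_le_mul_of_nonneg_right this (le_of_lt he)]
    have h4 : 0 ≤ t ^ (σ + 1) / Real.exp 1 := by positivity
    linarith
  · -- t > 1: log t ≤ t/e
    have hlog : 0 ≤ Real.log t := Real.log_nonneg (le_of_lt h1)
    rw [abs_of_nonneg hlog]
    have key : Real.log t ≤ t / Real.exp 1 := log_le_div_exp_one h0
    have : t ^ σ * Real.log t ≤ t ^ σ * (t / Real.exp 1) :=
      mul_le_mul_of_nonneg_left key (Real.rpow_nonneg ht σ)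
    have heq : t ^ σ * (t / Real.exp 1) = t ^ (σ + 1) / Real.exp 1 := by
      rw [Real.rpow_add h0, Real.rpow_one]; ring
    have h4 : (0:ℝ) ≤ 1 / (σ * Real.exp 1) := by positivity
    linarith [this, heq ▸ this]

/-- A priori estimate for the logarithmic term (proof of Theorem 3.2): if `U ⊂ ℝ^N`
has finite measure, `σ > 0`, and `|u v|^(σ+1)` is integrable on `U`, then
`∫_U |u|^σ |v|^σ |log|u v|| ≤ |U|/(σ e) + (1/e) ∫_U |u v|^(σ+1)`
(the integrand on the left is `0` where `u v = 0`). -/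
theorem log_term_apriori_estimate (N : ℕ) (U : Set (Fin N → ℝ))
    (hU : MeasurableSet U) (hUfin : volume U < ⊤)
    (σ : ℝ) (hσ : 0 < σ)
    (u v : (Fin N → ℝ) → ℝ) (hu : Measurable u) (hv : Measurable v)
    (hint : IntegrableOn (fun x => |u x * v x| ^ (σ + 1)) U) :
    (∫ x in U, |u x| ^ σ * |v x| ^ σ * |Real.log (|u x * v x|)|) ≤
      (volume U).toReal / (σ * Real.exp 1) +
        (1 / Real.exp 1) * ∫ x in U, |u x * v x| ^ (σ + 1) := by
  have he : (0:ℝ) < Real.exp 1 := Real.exp_pos 1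
  set f : (Fin N → ℝ) → ℝ := fun x => |u x| ^ σ * |v x| ^ σ * |Real.log (|u x * v x|)|
  set g : (Fin N → ℝ) → ℝ := fun x =>
    1 / (σ * Real.exp 1) + |u x * v x| ^ (σ + 1) / Real.exp 1
  have habs : ∀ x, |u x| ^ σ * |v x| ^ σ = |u x * v x| ^ σ := fun x => by
    rw [abs_mul, Real.mul_rpow (abs_nonneg _) (abs_nonneg _)]
  have hfg : ∀ x, f x ≤ g x := by
    intro x
    simp only [f, g, habs x]
    exact pointwise_log_bound hσ (abs_nonneg _)
  have hf0 : ∀ x, 0 ≤ f x := by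
    intro x
    simp only [f]
    positivity
  have hgint : IntegrableOn g U := by
    apply Integrable.add (integrableOn_const hUfin.ne)
    exact hint.div_const _
  have hfmeas : Measurable f := by
    apply Measurable.mul
    · exact ((hu.abs.pow_const σ).mul (hv.abs.pow_const σ))
    · exact ((hu.mul hv).abs.log).abs
  have hfint : IntegrableOn f U := by
    apply Integrable.mono' hgint hfmeas.aestronglyMeasurable.restrict
    filter_upwards with x
    rw [Real.norm_eq_abs, abs_of_nonneg (hf0 x)]
    exact hfg x
  have hle : (∫ x in U, f x) ≤ ∫ x in U, g x :=
    integral_mono hfint hgint hfg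
  have hg : (∫ x in U, g x) =
      (volume U).toReal / (σ * Real.exp 1) +
        (1 / Real.exp 1) * ∫ x in U, |u x * v x| ^ (σ + 1) := by
    have : (∫ x in U, g x) = (∫ _ in U, 1 / (σ * Real.exp 1)) +
        ∫ x in U, |u x * v x| ^ (σ + 1) / Real.exp 1 :=
      integral_add (integrableOn_const hUfin.ne) (hint.div_const _)
    rw [this, setIntegral_const, integral_div, smul_eq_mul]
    simp only [Measure.real]
    ring
  exact hg ▸ hle
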